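/- Let K > 0, ω > 0, φ > 0, x₁, x₂ ∈ ℝ², u = (x₁+x₂)/2, v = (x₂−x₁)/2. If ‖v‖/‖u‖ < tanh²(φ/2) and u ≠ 0, then (Kω³/sinh³φ) · ((‖x₁‖² + ‖x₂‖²) cosh φ − (x₁ ⋅ x₂)(1 + cosh²φ)) < 0. -/

import Mathlib

theorem stmt_10 (K ω φ : ℝ) (hK : 0 < K) (hω : 0 < ω) (hφ : 0 < φ)
    (x₁ x₂ : EuclideanSpace ℝ (Fin 2))
    (u v : EuclideanSpace ℝ (Fin 2))
    (hu : u = (1 / 2 : ℝ) • (x₁ + x₂)) (hv : v = (1 / 2 : ℝ) • (x₂ - x₁))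
    (hune : u ≠ 0)
    (hcond : ‖v‖ / ‖u‖ < Real.tanh (φ / 2) ^ 2) :
    (K * ω ^ 3 / Real.sinh φ ^ 3) *
      ((‖x₁‖ ^ 2 + ‖x₂‖ ^ 2) * Real.cosh φ - (inner ℝ x₁ x₂ : ℝ) * (1 + Real.cosh φ ^ 2)) < 0 := by
  have hs : 0 < Real.sinh φ := Real.sinh_pos_iff.2 hφ
  have hx1 : x₁ = u - v := by rw [hu, hv]; module
  have hx2 : x₂ = u + v := by rw [hu, hv]; module
  set a := ‖u‖ with ha'
  set b := ‖v‖ with hb'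
  set c := Real.cosh φ with hc'
  set t := Real.tanh (φ / 2) with ht'
  have ha : 0 < a := norm_pos_iff.2 hune
  have hb : 0 ≤ b := norm_nonneg v
  have hc1 : 1 < c := by
    have := Real.one_lt_cosh (x := φ)
    exact this.2 hφ.ne'
  have ht2 : t ^ 2 * (c + 1) = c - 1 := by
    have hcos : Real.cosh (φ / 2) ≠ 0 := (Real.cosh_pos (x := φ / 2)).ne'
    have h1 : c = 2 * Real.cosh (φ / 2) ^ 2 - 1 := by
      have h := Real.cosh_two_mul (φ / 2)
      rw [show 2 * (φ / 2) = φ by ring] at h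
      have h2 := Real.cosh_sq (φ / 2)
      rw [hc']; linarith
    have h2 : Real.sinh (φ / 2) ^ 2 = Real.cosh (φ / 2) ^ 2 - 1 := by
      have := Real.cosh_sq (φ / 2); linarith
    rw [ht', Real.tanh_eq_sinh_div_cosh]
    field_simp
    rw [h2, h1]; ring
  have hbval : b < a * t ^ 2 := by
    rw [div_lt_iff₀ ha] at hcond; linarith
  have hb2 : b ^ 2 < a ^ 2 * t ^ 4 := by
    nlinarith [hbval, hb, sq_nonneg t, ha.le, mul_nonneg ha.le (sq_nonneg t)]
  have key : b ^ 2 * (c + 1) ^ 2 - a ^ 2 * (c - 1) ^ 2 < 0 := by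
    have h : a ^ 2 * (c - 1) ^ 2 = a ^ 2 * t ^ 4 * (c + 1) ^ 2 := by
      rw [← ht2]; ring
    nlinarith [hb2, sq_nonneg (c + 1), hc1]
  have hnorm1 : ‖x₁‖ ^ 2 = a ^ 2 - 2 * (inner ℝ u v : ℝ) + b ^ 2 := by
    rw [hx1, norm_sub_sq_real]
  have hnorm2 : ‖x₂‖ ^ 2 = a ^ 2 + 2 * (inner ℝ u v : ℝ) + b ^ 2 := by
    rw [hx2, norm_add_sq_real]
  have hinner : (inner ℝ x₁ x₂ : ℝ) = a ^ 2 - b ^ 2 := by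
    rw [hx1, hx2, inner_sub_left, inner_add_right, inner_add_right,
      real_inner_comm v u, real_inner_self_eq_norm_sq, real_inner_self_eq_norm_sq]
    ring
  have hfactor : 0 < K * ω ^ 3 / Real.sinh φ ^ 3 := by positivity
  have heq : (‖x₁‖ ^ 2 + ‖x₂‖ ^ 2) * c - (inner ℝ x₁ x₂ : ℝ) * (1 + c ^ 2)
      = b ^ 2 * (c + 1) ^ 2 - a ^ 2 * (c - 1) ^ 2 := by
    rw [hnorm1, hnorm2, hinner]; ring
  rw [heq]
  exact mul_neg_of_pos_of_neg hfactor key
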